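/- Suppose ν > 0. Any solution (m,w) of the discrete constrained minimization problem (P_h) satisfies m_{i,j} > 0 for all (i,j). More precisely: if m, w satisfy m ≥ 0, w_{i,j} ∈ K for all (i,j), w_{i,j} = 0 whenever m_{i,j} = 0, the stationary discrete Fokker–Planck constraint −ν(Δ_h m)_{i,j} + (Bw)_{i,j} = 0, and h² Σ m_{i,j} = 1, then m_{i,j} > 0 for all (i,j). -/

import Mathlib

open scoped BigOperators
open Classical

noncomputable section

/-- The cone `K = ℝ₊ × ℝ₋ × ℝ₊ × ℝ₋`. -/
def Kset : Set (Fin 4 → ℝ) := {w | 0 ≤ w 0 ∧ w 1 ≤ 0 ∧ 0 ≤ w 2 ∧ w 3 ≤ 0}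

/-- for `ν > 0`, if `m ≥ 0`, `w` takes values in `K`, `w` vanishes
where `m` vanishes, `(m,w)` satisfies the stationary discrete Fokker–Planck
equation `−ν Δ_h m + B w = 0` on the discrete torus, and `h² Σ m = 1`, then
`m > 0` everywhere. -/
theorem stmt8 (N : ℕ) [NeZero N] (ν h : ℝ) (hν : 0 < ν) (hh : h = 1 / N)
    (m : ZMod N × ZMod N → ℝ) (w : ZMod N × ZMod N → (Fin 4 → ℝ))
    (hm : ∀ p, 0 ≤ m p)
    (hw : ∀ p, w p ∈ Kset)
    (hmw : ∀ p, m p = 0 → w p = 0)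
    (heq : ∀ i j : ZMod N,
      -ν * ((m (i + 1, j) + m (i - 1, j) + m (i, j + 1) + m (i, j - 1) - 4 * m (i, j)) / h ^ 2)
        + ((w (i, j) 0 - w (i - 1, j) 0) + (w (i + 1, j) 1 - w (i, j) 1)
            + (w (i, j) 2 - w (i, j - 1) 2) + (w (i, j + 1) 3 - w (i, j) 3)) / h = 0)
    (hmass : h ^ 2 * ∑ p, m p = 1) :
    ∀ p, 0 < m p := by
  have hNpos : 0 < (N : ℝ) := by
    exact_mod_cast Nat.pos_of_ne_zero (NeZero.ne N)
  have hh0 : 0 < h := by rw [hh]; positivity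
  -- step: zeros propagate to neighbors
  have step : ∀ i j : ZMod N, m (i, j) = 0 →
      m (i + 1, j) = 0 ∧ m (i - 1, j) = 0 ∧ m (i, j + 1) = 0 ∧ m (i, j - 1) = 0 := by
    intro i j h0
    have hw0 : w (i, j) = 0 := hmw _ h0
    have e := heq i j
    rw [h0, hw0] at e
    simp only [Pi.zero_apply, mul_zero, sub_zero, zero_sub] at e
    have hm1 := hm (i + 1, j); have hm2 := hm (i - 1, j)
    have hm3 := hm (i, j + 1); have hm4 := hm (i, j - 1)
    obtain ⟨a1, b1, c1, d1⟩ := hw (i - 1, j)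
    obtain ⟨a2, b2, c2, d2⟩ := hw (i + 1, j)
    obtain ⟨a3, b3, c3, d3⟩ := hw (i, j - 1)
    obtain ⟨a4, b4, c4, d4⟩ := hw (i, j + 1)
    set S := m (i + 1, j) + m (i - 1, j) + m (i, j + 1) + m (i, j - 1) with hS
    have hSnn : 0 ≤ S := by positivity
    set T := -w (i - 1, j) 0 + w (i + 1, j) 1 + -w (i, j - 1) 2 + w (i, j + 1) 3 with hT
    have hTnp : T ≤ 0 := by simp only [hT]; linarith
    have h2 : (0:ℝ) < h ^ 2 := by positivity
    have hX : 0 ≤ S / h ^ 2 := div_nonneg hSnn h2.le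
    have hY : T / h ≤ 0 := div_nonpos_of_nonpos_of_nonneg hTnp hh0.le
    have e' : -ν * (S / h ^ 2) + T / h = 0 := by
      linear_combination e
    have hνX : 0 ≤ ν * (S / h ^ 2) := mul_nonneg hν.le hX
    have hX0 : S / h ^ 2 = 0 := by
      rcases lt_or_eq_of_le hX with hlt | heqq
      · exfalso; nlinarith [mul_pos hν hlt]
      · exact heqq.symm
    have hS0 : S = 0 := by
      field_simp at hX0; simpa using hX0
    refine ⟨?_, ?_, ?_, ?_⟩ <;> (rw [hS] at hS0; linarith)
  by_contra hc
  push_neg at hc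
  obtain ⟨p0, hp0⟩ := hc
  have hp00 : m p0 = 0 := le_antisymm hp0 (hm p0)
  -- propagate along the first coordinate
  have row : ∀ a : ℕ, m (p0.1 + (a : ZMod N), p0.2) = 0 := by
    intro a
    induction a with
    | zero => simpa using hp00
    | succ n ih =>
      have := (step _ _ ih).1
      have : m (p0.1 + (n : ZMod N) + 1, p0.2) = 0 := this
      rw [Nat.cast_succ, ← add_assoc]
      exact this
  have grid : ∀ a b : ℕ, m (p0.1 + (a : ZMod N), p0.2 + (b : ZMod N)) = 0 := by
    intro a b
    induction b with
    | zero => simpa using row a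
    | succ n ih =>
      have := (step _ _ ih).2.2.1
      rw [Nat.cast_succ, ← add_assoc]
      exact this
  have allzero : ∀ q : ZMod N × ZMod N, m q = 0 := by
    intro q
    have h1 : ((q.1 - p0.1).val : ZMod N) = q.1 - p0.1 := ZMod.natCast_rightInverse _
    have h2 : ((q.2 - p0.2).val : ZMod N) = q.2 - p0.2 := ZMod.natCast_rightInverse _
    have := grid (q.1 - p0.1).val (q.2 - p0.2).val
    rw [h1, h2] at this
    simpa using this
  have : (∑ p, m p) = 0 := Finset.sum_eq_zero fun p _ => allzero p
  rw [this, mul_zero] at hmass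
  exact one_ne_zero hmass.symm
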